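/- Let g : ℝ^n → ℝ be convex and suppose there is a constant C ≥ 0 such that g(x+h) + g(x−h) − 2g(x) ≤ C‖h‖² for all x, h ∈ ℝ^n. Then g is differentiable at every point of ℝ^n and the gradient map ∇g : ℝ^n → ℝ^n is Lipschitz continuous with Lipschitz constant at most C. (This is the step converting the two-sided second-difference bound into C^{1,1}-regularity in the Bedford–Taylor-type argument.) -/

import Mathlib

open scoped RealInnerProductSpace

lemma exists_subgradient {n : ℕ} (g : EuclideanSpace ℝ (Fin n) → ℝ)
    (hg : ConvexOn ℝ Set.univ g) (hcont : Continuous g)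
    (x : EuclideanSpace ℝ (Fin n)) :
    ∃ p : EuclideanSpace ℝ (Fin n), ∀ y, ⟪p, y - x⟫ ≤ g y - g x := by
  classical
  set s : Set (EuclideanSpace ℝ (Fin n) × ℝ) := {q | g q.1 - q.2 < 0} with hs_def
  have hs_open : IsOpen s :=
    isOpen_lt ((hcont.comp continuous_fst).sub continuous_snd) continuous_const
  have hF : ConvexOn ℝ Set.univ (fun q : EuclideanSpace ℝ (Fin n) × ℝ => g q.1 - q.2) := by
    refine ⟨convex_univ, ?_⟩
    rintro q - r - u v hu hv huv
    have := hg.2 (Set.mem_univ q.1) (Set.mem_univ r.1) hu hv huv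
    simp only [smul_eq_mul] at this ⊢
    simp only [Prod.fst_add, Prod.smul_fst, Prod.snd_add, Prod.smul_snd, smul_eq_mul]
    linarith
  have hs_conv : Convex ℝ s := by
    have := hF.convex_lt 0
    simpa [hs_def, Set.sep_univ] using this
  have hx0 : ((x, g x) : EuclideanSpace ℝ (Fin n) × ℝ) ∉ s := by simp [hs_def]
  obtain ⟨ℓ, hℓ⟩ := geometric_hahn_banach_open_point hs_conv hs_open hx0
  set a : ℝ := ℓ (0, 1) with ha_def
  have hmem : ∀ (y : EuclideanSpace ℝ (Fin n)) (t : ℝ), 0 < t →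
      ((y, g y + t) : EuclideanSpace ℝ (Fin n) × ℝ) ∈ s := by
    intro y t ht; simp [hs_def]; linarith
  have hdecomp : ∀ (y : EuclideanSpace ℝ (Fin n)) (t : ℝ), ℓ (y, t) = ℓ (y, 0) + t * a := by
    intro y t
    have : ((y, t) : EuclideanSpace ℝ (Fin n) × ℝ)
        = (y, 0) + t • ((0 : EuclideanSpace ℝ (Fin n)), (1 : ℝ)) := by
      simp [Prod.ext_iff]
    rw [this, map_add, map_smul, smul_eq_mul]
  have ha : a < 0 := by
    have h1 := hℓ _ (hmem x 1 one_pos)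
    rw [hdecomp x (g x + 1), hdecomp x (g x)] at h1
    nlinarith
  have hane : a ≠ 0 := ne_of_lt ha
  have key : ∀ y, ℓ (y, 0) + a * g y ≤ ℓ (x, 0) + a * g x := by
    intro y
    by_contra hcon
    push_neg at hcon
    set b := ℓ (y, 0) + a * g y with hb
    set c := ℓ (x, 0) + a * g x with hc
    have ht : (0:ℝ) < (b - c) / (-2 * a) := by
      apply div_pos (by linarith) (by linarith)
    have h2 := hℓ _ (hmem y _ ht)
    rw [hdecomp y _, hdecomp x _] at h2
    have h3 : (b - c) / (-2 * a) * a = -((b - c) / 2) := by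
      field_simp
    have h4 : b + (b - c) / (-2 * a) * a < c := by
      rw [hb, hc]; ring_nf; ring_nf at h2; linarith
    rw [h3] at h4
    linarith
  set L : EuclideanSpace ℝ (Fin n) →L[ℝ] ℝ :=
    ℓ.comp (ContinuousLinearMap.inl ℝ (EuclideanSpace ℝ (Fin n)) ℝ) with hL_def
  refine ⟨(InnerProductSpace.toDual ℝ _).symm ((-a)⁻¹ • L), fun y => ?_⟩
  have hips : ∀ v, ⟪(InnerProductSpace.toDual ℝ (EuclideanSpace ℝ (Fin n))).symm
      ((-a)⁻¹ • L), v⟫ = (-a)⁻¹ * L v := by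
    intro v
    rw [map_smul, real_inner_smul_left]
    congr 1
    rw [InnerProductSpace.toDual_symm_apply]
  rw [hips]
  have hL : ∀ v, L v = ℓ (v, 0) := fun v => rfl
  have hLsub : L (y - x) = ℓ (y, 0) - ℓ (x, 0) := by
    rw [map_sub, hL, hL]
  rw [hLsub]
  have hna : (0:ℝ) < -a := by linarith
  rw [inv_mul_le_iff₀ hna]
  nlinarith [key y]

open scoped RealInnerProductSpace

lemma hasGradientAt_of_subgradient {n : ℕ} (g : EuclideanSpace ℝ (Fin n) → ℝ)
    (C : ℝ) (hC : 0 ≤ C)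
    (hbd : ∀ x h : EuclideanSpace ℝ (Fin n),
      g (x + h) + g (x - h) - 2 * g x ≤ C * ‖h‖ ^ 2)
    (x p : EuclideanSpace ℝ (Fin n))
    (hp : ∀ y, ⟪p, y - x⟫ ≤ g y - g x) :
    HasGradientAt g p x := by
  have herr : ∀ y, |g y - g x - ⟪p, y - x⟫| ≤ C * ‖y - x‖ ^ 2 := by
    intro y
    have h1 : 0 ≤ g y - g x - ⟪p, y - x⟫ := by linarith [hp y]
    rw [abs_of_nonneg h1]
    have h2 := hbd x (y - x)
    have hx1 : x + (y - x) = y := by abel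
    have hx2 : g y - g x ≤ C * ‖y - x‖ ^ 2 - (g (x - (y - x)) - g x) := by
      rw [hx1] at h2; linarith
    have h3 := hp (x - (y - x))
    have hx3 : x - (y - x) - x = -(y - x) := by abel
    rw [hx3, inner_neg_right] at h3
    linarith
  rw [hasGradientAt_iff_isLittleO, Asymptotics.isLittleO_iff]
  intro c hc
  have hball : ∀ᶠ y in nhds x, dist y x ≤ c / (C + 1) := by
    filter_upwards [Metric.closedBall_mem_nhds x (show 0 < c / (C+1) by positivity)]
      with y hy using hy
  filter_upwards [hball] with y hy
  rw [Real.norm_eq_abs]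
  rw [dist_eq_norm] at hy
  have h0 : (0:ℝ) ≤ ‖y - x‖ := norm_nonneg _
  have hy2 : ‖y - x‖ * (C + 1) ≤ c := by
    rw [← le_div_iff₀ (by positivity : (0:ℝ) < C + 1)]
    exact hy
  calc |g y - g x - ⟪p, y - x⟫| ≤ C * ‖y - x‖ ^ 2 := herr y
    _ ≤ c * ‖y - x‖ := by nlinarith [mul_le_mul_of_nonneg_left hy2 h0, sq_nonneg ‖y - x‖]
  
lemma half_bound {n : ℕ} (g : EuclideanSpace ℝ (Fin n) → ℝ)
    (C : ℝ) (hC : 0 ≤ C)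
    (hbd : ∀ x h : EuclideanSpace ℝ (Fin n),
      g (x + h) + g (x - h) - 2 * g x ≤ C * ‖h‖ ^ 2)
    (x p : EuclideanSpace ℝ (Fin n))
    (hp : ∀ y, ⟪p, y - x⟫ ≤ g y - g x) :
    ∀ y, g y ≤ g x + ⟪p, y - x⟫ + C / 2 * ‖y - x‖ ^ 2 := by
  set e : EuclideanSpace ℝ (Fin n) → ℝ := fun h => g (x + h) - g x - ⟪p, h⟫ with he_def
  have he0 : ∀ h, 0 ≤ e h := by
    intro h
    have := hp (x + h)
    simp only [add_sub_cancel_left] at this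
    simp only [he_def]; linarith
  have heC : ∀ h, e h ≤ C * ‖h‖ ^ 2 := by
    intro h
    have h2 := hbd x h
    have h3 := he0 (-h)
    simp only [he_def, inner_neg_right] at h3 ⊢
    have : x + -h = x - h := by abel
    rw [this] at h3
    linarith
  have hstep : ∀ h, e h ≤ 2 * e ((2:ℝ)⁻¹ • h) + C * ‖h‖ ^ 2 / 4 := by
    intro h
    have h2 := hbd (x + (2:ℝ)⁻¹ • h) ((2:ℝ)⁻¹ • h)
    have e1 : x + (2:ℝ)⁻¹ • h + (2:ℝ)⁻¹ • h = x + h := by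
      rw [add_assoc, ← add_smul]; norm_num
    have e2 : x + (2:ℝ)⁻¹ • h - (2:ℝ)⁻¹ • h = x := by abel
    rw [e1, e2] at h2
    have e3 : ‖(2:ℝ)⁻¹ • h‖ ^ 2 = ‖h‖ ^ 2 / 4 := by
      rw [norm_smul]; simp [norm_inv]; ring
    rw [e3] at h2
    have e4 : ⟪p, (2:ℝ)⁻¹ • h⟫ = (2:ℝ)⁻¹ * ⟪p, h⟫ := real_inner_smul_right p h _
    simp only [he_def]
    rw [e4]
    nlinarith
  have hiter : ∀ (m : ℕ) (h : EuclideanSpace ℝ (Fin n)),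
      e h ≤ 2 ^ m * e ((2 ^ m : ℝ)⁻¹ • h) + C * ‖h‖ ^ 2 / 2 * (1 - ((2:ℝ) ^ m)⁻¹) := by
    intro m
    induction m with
    | zero => intro h; simp
    | succ m ih =>
      intro h
      have h1 := ih h
      have h2 := hstep (((2:ℝ) ^ m)⁻¹ • h)
      have e1 : (2:ℝ)⁻¹ • ((2:ℝ) ^ m)⁻¹ • h = ((2:ℝ) ^ (m+1))⁻¹ • h := by
        rw [smul_smul, ← mul_inv, ← pow_succ']
      have e2 : ‖((2:ℝ) ^ m)⁻¹ • h‖ ^ 2 = (((2:ℝ) ^ m)⁻¹) ^ 2 * ‖h‖ ^ 2 := by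
        rw [norm_smul]; simp [norm_inv]; ring
      rw [e1, e2] at h2
      have hpm : (0:ℝ) < 2 ^ m := by positivity
      have key : (2:ℝ) ^ m * e (((2:ℝ) ^ m)⁻¹ • h)
          ≤ 2 ^ (m+1) * e (((2:ℝ) ^ (m+1))⁻¹ • h) + C * ‖h‖ ^ 2 / 2 * (2:ℝ)⁻¹ ^ m / 2 := by
        have := mul_le_mul_of_nonneg_left h2 (le_of_lt hpm)
        calc (2:ℝ) ^ m * e (((2:ℝ) ^ m)⁻¹ • h)
            ≤ 2 ^ m * (2 * e (((2:ℝ) ^ (m+1))⁻¹ • h) + C * ((((2:ℝ) ^ m)⁻¹) ^ 2 * ‖h‖ ^ 2) / 4) := this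
          _ = 2 ^ (m+1) * e (((2:ℝ) ^ (m+1))⁻¹ • h) + C * ‖h‖ ^ 2 / 2 * (2:ℝ)⁻¹ ^ m / 2 := by
              rw [pow_succ]
              field_simp
              have h12 : ((1:ℝ) / 2) ^ m * 2 ^ m = 1 := by rw [← mul_pow]; norm_num
              linear_combination (-(C * ‖h‖ ^ 2 * 4)) * h12
      have hfin : C * ‖h‖ ^ 2 / 2 * (1 - ((2:ℝ) ^ m)⁻¹) + C * ‖h‖ ^ 2 / 2 * (2:ℝ)⁻¹ ^ m / 2
          = C * ‖h‖ ^ 2 / 2 * (1 - ((2:ℝ) ^ (m+1))⁻¹) := by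
        rw [pow_succ]
        rw [inv_pow]
        field_simp
        ring
      linarith [key, h1, hfin.ge, hfin.le]
  intro y
  have main : e (y - x) ≤ C * ‖y - x‖ ^ 2 / 2 := by
    set h := y - x
    have hb : ∀ m : ℕ, e h ≤ C * ‖h‖ ^ 2 * ((2:ℝ)⁻¹ ^ m) + C * ‖h‖ ^ 2 / 2 := by
      intro m
      have h1 := hiter m h
      have h2 := heC (((2:ℝ) ^ m)⁻¹ • h)
      have e2 : ‖((2:ℝ) ^ m)⁻¹ • h‖ ^ 2 = (((2:ℝ) ^ m)⁻¹) ^ 2 * ‖h‖ ^ 2 := by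
        rw [norm_smul]; simp [norm_inv]; ring
      rw [e2] at h2
      have hpm : (0:ℝ) < 2 ^ m := by positivity
      have h3 : (2:ℝ) ^ m * e (((2:ℝ) ^ m)⁻¹ • h) ≤ C * ‖h‖ ^ 2 * ((2:ℝ)⁻¹ ^ m) := by
        calc (2:ℝ) ^ m * e (((2:ℝ) ^ m)⁻¹ • h)
            ≤ 2 ^ m * (C * ((((2:ℝ) ^ m)⁻¹) ^ 2 * ‖h‖ ^ 2)) :=
              mul_le_mul_of_nonneg_left h2 (le_of_lt hpm)
          _ = C * ‖h‖ ^ 2 * ((2:ℝ)⁻¹ ^ m) := by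
              rw [inv_pow]
              field_simp
              have h12 : ((1:ℝ) / 2) ^ m * 2 ^ m = 1 := by rw [← mul_pow]; norm_num
              linear_combination (-(C * ‖h‖ ^ 2)) * h12
      have h4 : C * ‖h‖ ^ 2 / 2 * (1 - ((2:ℝ) ^ m)⁻¹) ≤ C * ‖h‖ ^ 2 / 2 := by
        have : (0:ℝ) ≤ ((2:ℝ) ^ m)⁻¹ := by positivity
        nlinarith [sq_nonneg ‖h‖, mul_nonneg hC (sq_nonneg ‖h‖)]
      linarith
    have htend : Filter.Tendsto (fun m : ℕ => C * ‖h‖ ^ 2 * ((2:ℝ)⁻¹ ^ m) + C * ‖h‖ ^ 2 / 2)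
        Filter.atTop (nhds (C * ‖h‖ ^ 2 / 2)) := by
      have : Filter.Tendsto (fun m : ℕ => ((2:ℝ)⁻¹) ^ m) Filter.atTop (nhds 0) := by
        apply tendsto_pow_atTop_nhds_zero_of_lt_one <;> norm_num
      have h5 := (this.const_mul (C * ‖h‖ ^ 2)).add_const (C * ‖h‖ ^ 2 / 2)
      simpa using h5
    exact ge_of_tendsto' htend hb
  have hx1 : x + (y - x) = y := by abel
  simp only [he_def, hx1] at main
  linarith

/-- a convex function `g : ℝⁿ → ℝ` satisfying the two-sided second-difference
bound `g(x+h) + g(x−h) − 2g(x) ≤ C‖h‖²` is differentiable everywhere, and its gradient map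
is Lipschitz continuous with Lipschitz constant at most `C`. -/
theorem convex_second_difference_C11 (n : ℕ)
    (g : EuclideanSpace ℝ (Fin n) → ℝ)
    (hg : ConvexOn ℝ Set.univ g)
    (C : ℝ) (hC : 0 ≤ C)
    (hbd : ∀ x h : EuclideanSpace ℝ (Fin n),
      g (x + h) + g (x - h) - 2 * g x ≤ C * ‖h‖ ^ 2) :
    (∀ x, DifferentiableAt ℝ g x) ∧
    LipschitzWith C.toNNReal (gradient g) := by
  have hcont : Continuous g := by
    rw [← continuousOn_univ]
    exact hg.continuousOn isOpen_univ
  choose p hp using fun x => exists_subgradient g hg hcont x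
  have hdiff : ∀ x, HasGradientAt g (p x) x :=
    fun x => hasGradientAt_of_subgradient g C hC hbd x (p x) (hp x)
  refine ⟨fun x => (hdiff x).differentiableAt, ?_⟩
  have hgrad : ∀ x, gradient g x = p x := fun x => (hdiff x).gradient
  apply LipschitzWith.of_dist_le_mul
  intro x y
  rw [dist_eq_norm, dist_eq_norm, hgrad, hgrad, Real.coe_toNNReal C hC]
  set d : EuclideanSpace ℝ (Fin n) := p y - p x with hd_def
  have keys : ∀ s : ℝ, 0 ≤ s →
      (2 * s - C * s ^ 2) * ‖d‖ ^ 2 ≤ ⟪d, y - x⟫ := by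
    intro s hs
    -- (I)
    have A : g x + (⟪p x, y - x⟫ - s * ⟪p x, d⟫) ≤ g (y - s • d) := by
      have h2 := hp x (y - s • d)
      have e1 : y - s • d - x = y - x - s • d := sub_right_comm y (s • d) x
      rw [e1, inner_sub_right, real_inner_smul_right] at h2
      linarith
    have B : g (y - s • d) ≤ g y + (-(s * ⟪p y, d⟫)) + C / 2 * (s ^ 2 * ‖d‖ ^ 2) := by
      have h1 := half_bound g C hC hbd y (p y) (hp y) (y - s • d)
      have e1 : y - s • d - y = -(s • d) := sub_sub_cancel_left y (s • d)
      rw [e1, inner_neg_right, real_inner_smul_right, norm_neg, norm_smul,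
        Real.norm_eq_abs, abs_of_nonneg hs, mul_pow] at h1
      linarith
    -- (II)
    have A' : g y + (⟪p y, x - y⟫ + s * ⟪p y, d⟫) ≤ g (x + s • d) := by
      have h2 := hp y (x + s • d)
      have e1 : x + s • d - y = x - y + s • d := add_sub_right_comm x (s • d) y
      rw [e1, inner_add_right, real_inner_smul_right] at h2
      linarith
    have B' : g (x + s • d) ≤ g x + s * ⟪p x, d⟫ + C / 2 * (s ^ 2 * ‖d‖ ^ 2) := by
      have h1 := half_bound g C hC hbd x (p x) (hp x) (x + s • d)
      rw [add_sub_cancel_left, real_inner_smul_right, norm_smul,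
        Real.norm_eq_abs, abs_of_nonneg hs, mul_pow] at h1
      linarith
    have hdd : ⟪p y, d⟫ - ⟪p x, d⟫ = ‖d‖ ^ 2 := by
      rw [← inner_sub_left, ← hd_def, real_inner_self_eq_norm_sq]
    have hdd' : s * ⟪p y, d⟫ - s * ⟪p x, d⟫ = s * ‖d‖ ^ 2 := by
      rw [← mul_sub, hdd]
    have hyx : ⟪p y, x - y⟫ = -⟪p y, y - x⟫ := by
      rw [← neg_sub y x, inner_neg_right]
    have hsub : ⟪p y, y - x⟫ - ⟪p x, y - x⟫ = ⟪d, y - x⟫ := by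
      rw [← inner_sub_left, ← hd_def]
    nlinarith [A, B, A', B', hdd', hyx, hsub]
  have hCS : ⟪d, y - x⟫ ≤ ‖d‖ * ‖y - x‖ := real_inner_le_norm d (y - x)
  have hgoal : ‖d‖ ≤ C * ‖y - x‖ := by
    rcases eq_or_lt_of_le hC with hC0 | hCpos
    · -- C = 0
      by_contra hne
      push_neg at hne
      have hdpos : 0 < ‖d‖ := by
        rcases (norm_nonneg d).eq_or_lt with h | h
        · exfalso; apply absurd hne; push_neg; rw [← h, ← hC0]; simp
        · exact h
      set s := (‖d‖ * ‖y - x‖ + 1) / (2 * ‖d‖ ^ 2) with hs_def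
      have hs : 0 ≤ s := by positivity
      have h1 := keys s hs
      rw [← hC0] at h1
      have h2 : 2 * s * ‖d‖ ^ 2 = ‖d‖ * ‖y - x‖ + 1 := by
        rw [hs_def]; field_simp
      nlinarith
    · -- C > 0
      have h1 := keys C⁻¹ (le_of_lt (inv_pos.mpr hCpos))
      have h2 : 2 * C⁻¹ - C * C⁻¹ ^ 2 = C⁻¹ := by
        field_simp
        ring
      rw [h2] at h1
      have h3 : ‖d‖ ^ 2 ≤ C * (‖d‖ * ‖y - x‖) := by
        rw [← inv_mul_le_iff₀ hCpos]
        linarith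
      rcases (norm_nonneg d).eq_or_lt with h | h
      · rw [← h]; positivity
      · nlinarith
  calc ‖p x - p y‖ = ‖d‖ := by rw [hd_def, norm_sub_rev]
    _ ≤ C * ‖y - x‖ := hgoal
    _ = C * ‖x - y‖ := by rw [norm_sub_rev]
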